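/- Let n > 1 be an integer and let A, B be integers with 2^(n-1) < A < 2^n, 2^(n-1) < B < 2^n, and A > B. Then there do not exist an integer m ≥ n - 1 and an integer C with 2^(m-1) < C < 2^m such that A / B = C / 2^(m-1) + 1 / 2^m. -/

import Mathlib

/-- Division midpoint lemma, case `A > B`: for significand numerators
`A, B ∈ (2^(n-1), 2^n)` with `A > B`, there is no `m ≥ n - 1` and
`C ∈ (2^(m-1), 2^m)` such that `A / B = C / 2^(m-1) + 1 / 2^m`. -/
theorem division_not_midpoint_gt (n : ℕ) (hn : 1 < n) (A B : ℤ)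
    (hA1 : 2 ^ (n - 1) < A) (hA2 : A < 2 ^ n)
    (hB1 : 2 ^ (n - 1) < B) (hB2 : B < 2 ^ n) (hAB : B < A) :
    ¬ ∃ (m : ℕ) (C : ℤ), n - 1 ≤ m ∧ 2 ^ (m - 1) < C ∧ C < 2 ^ m ∧
      (A : ℝ) / (B : ℝ) = (C : ℝ) / 2 ^ (m - 1) + 1 / 2 ^ m := by
  rintro ⟨m, C, hm, hC1, hC2, heq⟩
  have hm1 : 1 ≤ m := by omega
  have hBR : (0:ℝ) < (B:ℝ) := by
    have : (0:ℤ) < B := lt_trans (by positivity) hB1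
    exact_mod_cast this
  have hmm : m = (m - 1) + 1 := by omega
  rw [hmm, pow_succ] at heq
  have hp : (0:ℝ) < (2:ℝ) ^ (m - 1) := by positivity
  have keyR : (A:ℝ) * (2 ^ (m-1) * 2) = (B:ℝ) * (2 * C + 1) := by
    field_simp at heq
    simp only [Nat.add_sub_cancel] at heq
    apply mul_left_cancel₀ (ne_of_gt hp)
    linear_combination heq
  have key : A * (2 ^ (m-1) * 2) = B * (2 * C + 1) := by exact_mod_cast keyR
  have hdvd : (2:ℤ) ^ (n - 1) ∣ B * (2 * C + 1) := by
    rw [← key]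
    have h2m : (2:ℤ) ^ (n - 1) ∣ 2 ^ (m-1) * 2 := by
      rw [← pow_succ]; exact pow_dvd_pow 2 (by omega)
    exact h2m.mul_left A
  have hcop : IsCoprime ((2:ℤ) ^ (n - 1)) (2 * C + 1) :=
    IsCoprime.pow_left ⟨-C, 1, by ring⟩
  have hdvdB : (2:ℤ) ^ (n - 1) ∣ B := hcop.dvd_of_dvd_mul_right hdvd
  obtain ⟨q, hq⟩ := hdvdB
  have h2 : (0:ℤ) < 2 ^ (n - 1) := by positivity
  have hn2 : (2:ℤ) ^ n = 2 ^ (n-1) * 2 := by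
    rw [← pow_succ]; congr 1; omega
  rw [hq] at hB1 hB2
  rw [hn2] at hB2
  have hq1 : 1 < q := lt_of_mul_lt_mul_left (by linarith) (le_of_lt h2)
  have hq2 : q < 2 := lt_of_mul_lt_mul_left hB2 (le_of_lt h2)
  omega
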